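/- Let n ≥ 3 and let d_0, …, d_{n−1} be integers with d_i ≥ 2 for all i. Let M be the symmetric n×n real matrix with M_{ii} = −d_i, M_{ij} = 1 whenever j ≡ i+1 or j ≡ i−1 (mod n), and M_{ij} = 0 otherwise. Then M is negative definite if and only if d_j ≥ 3 for some j. -/

import Mathlib

lemma fin_one_ne_zero' (n : ℕ) [NeZero n] (hn : 3 ≤ n) : (1 : Fin n) ≠ 0 := by
  intro h
  have := congrArg Fin.val h
  rw [Fin.val_one', Fin.val_zero, Nat.mod_eq_of_lt (by omega)] at this
  omega

lemma fin_two_ne_zero' (n : ℕ) [NeZero n] (hn : 3 ≤ n) : (2 : Fin n) ≠ 0 := by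
  intro h
  have h1 := congrArg Fin.val h
  rw [show (2 : Fin n) = 1 + 1 from Fin.ext (by simp [Fin.val_add])] at h1
  have h2 : ((1 : Fin n) + 1).val = (1 % n + 1 % n) % n := by
    simp [Fin.add_def, Fin.val_one']
  rw [h2, Fin.val_zero, Nat.mod_eq_of_lt (a := 1) (by omega),
    Nat.mod_eq_of_lt (by omega)] at h1
  omega

lemma fin_add_one_ne (n : ℕ) [NeZero n] (hn : 3 ≤ n) (i : Fin n) : i + 1 ≠ i := by
  intro h
  exact fin_one_ne_zero' n hn (add_left_cancel (a := i) (by simpa using h))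

lemma fin_sub_one_ne (n : ℕ) [NeZero n] (hn : 3 ≤ n) (i : Fin n) : i - 1 ≠ i := by
  intro h
  apply fin_add_one_ne n hn i
  conv_lhs => rw [← h]
  exact sub_add_cancel i 1

lemma fin_add_sub_ne (n : ℕ) [NeZero n] (hn : 3 ≤ n) (i : Fin n) : i + 1 ≠ i - 1 := by
  intro h
  apply fin_two_ne_zero' n hn
  apply add_left_cancel (a := i)
  rw [add_zero, show i + 2 = i + 1 + 1 by rw [add_assoc]; congr 1; ext; simp [Fin.val_add], h, sub_add_cancel]

lemma entry_split (n : ℕ) [NeZero n] (hn : 3 ≤ n) (d : Fin n → ℤ) (i j : Fin n) :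
    (if i = j then -(d i : ℝ) else if j = i + 1 ∨ j + 1 = i then 1 else 0)
      = (if j = i then -(d i : ℝ) else 0) + (if j = i + 1 then 1 else 0)
        + (if j = i - 1 then 1 else 0) := by
  have hne1 := fin_add_one_ne n hn i
  have hne2 := fin_sub_one_ne n hn i
  have hne3 := fin_add_sub_ne n hn i
  by_cases h1 : i = j
  · subst h1
    rw [if_pos rfl, if_pos rfl, if_neg (Ne.symm hne1), if_neg (Ne.symm hne2)]
    ring
  · rw [if_neg h1, if_neg (fun h : j = i => h1 h.symm)]
    by_cases h2 : j = i + 1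
    · rw [if_pos (Or.inl h2), if_pos h2, if_neg (h2 ▸ hne3)]
      norm_num
    · by_cases h3 : j + 1 = i
      · have h3' : j = i - 1 := by rw [← h3, add_sub_cancel_right]
        rw [if_pos (Or.inr h3), if_neg h2, if_pos h3']
        norm_num
      · have h3' : j ≠ i - 1 := fun h => h3 (by rw [h, sub_add_cancel])
        rw [if_neg (by tauto), if_neg h2, if_neg h3']
        norm_num

lemma key (n : ℕ) [NeZero n] (hn : 3 ≤ n) (d : Fin n → ℤ) (x : Fin n → ℝ) :
    dotProduct x ((Matrix.of fun i j : Fin n =>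
          if i = j then -(d i : ℝ) else if j = i + 1 ∨ j + 1 = i then 1 else 0).mulVec x)
      = -(∑ i, (x i - x (i + 1))^2) - ∑ i, ((d i : ℝ) - 2) * (x i)^2 := by
  have hmv : ∀ i, ((Matrix.of fun i j : Fin n =>
          if i = j then -(d i : ℝ) else if j = i + 1 ∨ j + 1 = i then 1 else 0).mulVec x) i
      = -(d i : ℝ) * x i + x (i + 1) + x (i - 1) := by
    intro i
    unfold Matrix.mulVec dotProduct
    simp only [Matrix.of_apply]
    calc ∑ j, (if i = j then -(d i : ℝ) else if j = i + 1 ∨ j + 1 = i then 1 else 0) * x j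
        = ∑ j, ((if j = i then -(d i : ℝ) * x j else 0) + (if j = i + 1 then x j else 0)
            + (if j = i - 1 then x j else 0)) := by
          refine Finset.sum_congr rfl fun j _ => ?_
          rw [entry_split n hn d i j, add_mul, add_mul, ite_mul, ite_mul, ite_mul,
            zero_mul, one_mul]
      _ = -(d i : ℝ) * x i + x (i + 1) + x (i - 1) := by
          rw [Finset.sum_add_distrib, Finset.sum_add_distrib,
            Finset.sum_ite_eq' Finset.univ i (fun j => -(d i : ℝ) * x j),
            Finset.sum_ite_eq' Finset.univ (i + 1) x,
            Finset.sum_ite_eq' Finset.univ (i - 1) x]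
          simp
  unfold dotProduct
  simp only [hmv]
  have hre1 : ∑ i, x i * x (i - 1) = ∑ i, x (i + 1) * x i := by
    refine Fintype.sum_equiv (Equiv.subRight (1 : Fin n)) _ _ fun i => ?_
    simp only [Equiv.subRight_apply]
    rw [sub_add_cancel]
  have hre2 : ∑ i, (x (i + 1))^2 = ∑ i, (x i)^2 := by
    exact Fintype.sum_equiv (Equiv.addRight (1 : Fin n)) _ _ fun i => rfl
  have expand : ∀ i : Fin n, x i * (-(d i : ℝ) * x i + x (i + 1) + x (i - 1))
      = -((d i : ℝ) * (x i)^2) + x i * x (i + 1) + x i * x (i - 1) := fun i => by ring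
  have e1 : ∀ i : Fin n, (x i - x (i + 1))^2
      = (x i)^2 + (x (i + 1))^2 - 2 * (x i * x (i + 1)) := fun i => by ring
  have e2 : ∀ i : Fin n, ((d i : ℝ) - 2) * (x i)^2
      = (d i : ℝ) * (x i)^2 - 2 * (x i)^2 := fun i => by ring
  simp only [expand, e1, e2]
  rw [Finset.sum_add_distrib, Finset.sum_add_distrib, Finset.sum_sub_distrib,
    Finset.sum_sub_distrib, Finset.sum_add_distrib, hre1, hre2]
  have h3 : ∑ i, x (i + 1) * x i = ∑ i, x i * x (i + 1) :=
    Finset.sum_congr rfl fun i _ => by ring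
  rw [h3, Finset.sum_neg_distrib, ← Finset.mul_sum, ← Finset.mul_sum]
  ring

/-- The cyclic intersection matrix of a cycle of `n ≥ 3` rational curves with
self-intersections `−dᵢ` and adjacent curves meeting once (indices mod `n`)
is negative definite iff some `d j ≥ 3`. -/
theorem cyclic_intersection_matrix_negDef_iff
    (n : ℕ) [NeZero n] (hn : 3 ≤ n) (d : Fin n → ℤ) (h2 : ∀ i, 2 ≤ d i) :
    (∀ x : Fin n → ℝ, x ≠ 0 →
        dotProduct x ((Matrix.of fun i j : Fin n =>
          if i = j then -(d i : ℝ) else if j = i + 1 ∨ j + 1 = i then 1 else 0).mulVec x) < 0)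
      ↔ ∃ j, 3 ≤ d j := by
  constructor
  · intro h
    by_contra hc
    push_neg at hc
    have hd2 : ∀ i, d i = 2 := fun i => le_antisymm (by have := hc i; omega) (h2 i)
    set x : Fin n → ℝ := fun _ => 1 with hxdef
    have hx : x ≠ 0 := by
      intro h0
      have := congrFun h0 ⟨0, by omega⟩
      norm_num [hxdef] at this
    have hlt := h x hx
    rw [key n hn d x] at hlt
    have hz : ∀ i : Fin n, (x i - x (i + 1))^2 = 0 := fun i => by norm_num [hxdef]
    have hz2 : ∀ i : Fin n, ((d i : ℝ) - 2) * (x i)^2 = 0 := fun i => by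
      rw [hd2 i]; norm_num
    rw [Finset.sum_congr rfl (fun i _ => hz i), Finset.sum_congr rfl (fun i _ => hz2 i)] at hlt
    simp at hlt
  · rintro ⟨j, hj⟩ x hx
    rw [key n hn d x]
    set A := ∑ i, (x i - x (i + 1))^2 with hA
    set B := ∑ i, ((d i : ℝ) - 2) * (x i)^2 with hB
    have hAnn : 0 ≤ A := Finset.sum_nonneg fun i _ => sq_nonneg _
    have hBnn : 0 ≤ B := Finset.sum_nonneg fun i _ => by
      have : (2 : ℝ) ≤ (d i : ℝ) := by exact_mod_cast h2 i
      exact mul_nonneg (by linarith) (sq_nonneg _)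
    by_contra hc
    push_neg at hc
    have hA0 : A = 0 := by linarith
    have hB0 : B = 0 := by linarith
    have hAz : ∀ i : Fin n, (x i - x (i + 1))^2 = 0 := by
      have := (Finset.sum_eq_zero_iff_of_nonneg
        (fun i _ => sq_nonneg (x i - x (i + 1)))).mp hA0
      exact fun i => this i (Finset.mem_univ i)
    have hstep : ∀ i : Fin n, x i = x (i + 1) := fun i => by
      have := pow_eq_zero_iff (n := 2) (by norm_num) |>.mp (hAz i)
      linarith [sub_eq_zero.mp this]
    have hBz : ((d j : ℝ) - 2) * (x j)^2 = 0 := by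
      have := (Finset.sum_eq_zero_iff_of_nonneg
        (fun i _ => by
          have : (2 : ℝ) ≤ (d i : ℝ) := by exact_mod_cast h2 i
          exact mul_nonneg (by linarith) (sq_nonneg _))).mp hB0
      exact this j (Finset.mem_univ j)
    have hxj : x j = 0 := by
      have hd : (0 : ℝ) < (d j : ℝ) - 2 := by
        have : (3 : ℝ) ≤ (d j : ℝ) := by exact_mod_cast hj
        linarith
      have := mul_eq_zero.mp hBz
      rcases this with h' | h'
      · linarith
      · exact pow_eq_zero_iff (n := 2) (by norm_num) |>.mp h'
    open Fin.CommRing in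
    have hconst : ∀ (k : ℕ) (i : Fin n), x (i + (k : Fin n)) = x i := by
      intro k
      induction k with
      | zero => intro i; simp
      | succ k ih =>
        intro i
        have hcast : ((k + 1 : ℕ) : Fin n) = (k : Fin n) + 1 := by push_cast; ring
        rw [hcast, ← add_assoc, ← hstep (i + (k : Fin n)), ih i]
    have hall : ∀ i : Fin n, x i = 0 := by
      intro i
      have : x i = x j := by
        open Fin.CommRing in
        have h1 : j + ((i - j : Fin n)) = i := by ring
        open Fin.CommRing in
        have h2' : (((i - j : Fin n).val : ℕ) : Fin n) = i - j := Fin.cast_val_eq_self _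
        open Fin.CommRing in
        calc x i = x (j + (((i - j : Fin n).val : ℕ) : Fin n)) := by rw [h2', h1]
          _ = x j := hconst _ j
      rw [this, hxj]
    exact hx (funext fun i => hall i)
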